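/- (Lemma 5.4) Let a_1,…,a_k ∈ S, let α = (a_1,…,a_{k-1}) ∈ L_1 and β = (a_2,…,a_k) ∈ L_{k+1}, and let P be a directed path in G from α to β that contains neither u, nor v, nor any ba-type back edge. Fix i with 2 ≤ i ≤ k (P visits L_i by the layer observation), and let γ_1 and γ_2 be the first and last vertices of L_i that P visits; let P_1 be the subpath of P from α to γ_1 and P_2 the subpath of P from γ_2 to β. If P_1 does not visit B, then γ_1 has the vector prefix (a_1,…,a_{k-i}). If P_2 does not visit A, then γ_2 has the suffix (a_{k-i+3},…,a_k,x) for some coordinate array x. -/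

import Mathlib

namespace DiamLB

/-! ## Generic directed-graph notions -/

/-- There is a directed walk of length `n` from `a` to `b`. -/
def HasWalkLen {V : Type*} (Adj : V → V → Prop) : ℕ → V → V → Prop
  | 0, a, b => a = b
  | n + 1, a, b => ∃ c, Adj a c ∧ HasWalkLen Adj n c b

/-- `P 0, P 1, …, P n` is a directed walk. -/
def IsWalk {V : Type*} (Adj : V → V → Prop) (P : ℕ → V) (n : ℕ) : Prop :=
  ∀ t, t < n → Adj (P t) (P (t + 1))

/-- The shortest-path distance from `a` to `b` is at most `m`. -/
def DistLE {V : Type*} (Adj : V → V → Prop) (a b : V) (m : ℕ) : Prop :=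
  ∃ n ≤ m, HasWalkLen Adj n a b

/-! ## The construction (Section 3, `k ≥ 5`) -/

/-- Boolean vectors of length `d`, i.e. elements of `{0,1}^d`. -/
abbrev Vec (d : ℕ) := Fin d → Bool

/-- The all-ones vector. -/
def ones (d : ℕ) : Vec d := fun _ => true

/-- Tags naming the layers of the construction. -/
inductive Tag : Type
  | L (i : ℕ)
  | L' (i : ℕ)
  | A (i : ℕ)
  | B (i : ℕ)

/-- Potential vertices of the construction: a tagged partial tuple of vectors
(position `j : Fin k` holding the vector with 1-based index `j+1`) together with a
coordinate array `x` (1-based entry `x_ℓ` at position `ℓ-1 : Fin (k-1)`), plus the two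
special vertices `uu` (the vertex `u`) and `vv` (the vertex `v`).  Vertices carrying no
coordinate array in the paper are modelled with the all-zero coordinate array. -/
inductive Vert (k d : ℕ) : Type
  | node (tag : Tag) (p : Fin k → Option (Vec d)) (x : Fin (k - 1) → Fin d) : Vert k d
  | uu : Vert k d
  | vv : Vert k d

/-- The positions (0-based) satisfying `F` are filled by vectors of `S`, and the other
positions are empty. -/
def FillsS (k d : ℕ) (S : Finset (Vec d)) (F : ℕ → Prop) (p : Fin k → Option (Vec d)) :
    Prop :=
  ∀ j : Fin k, (F (j : ℕ) → ∃ a ∈ S, p j = some a) ∧ (¬ F (j : ℕ) → p j = none)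

/-- The dummy (all-zero) coordinate array, used for vertices that carry no coordinate
array in the paper. -/
def ZeroX (k d : ℕ) (x : Fin (k - 1) → Fin d) : Prop :=
  ∀ ℓ, (x ℓ : ℕ) = 0

/-- The compatibility condition between the vector tuple and the coordinate array of a
vertex of `L_i` (Table 1): for `1 ≤ j ≤ k-i` (the `a_j`), `a_j[x_ℓ] = 1` for all
`1 ≤ ℓ ≤ k-j`, and for `k-i+3 ≤ j ≤ k` (the `b_j`), `b_j[x_ℓ] = 1` for all
`k-j+1 ≤ ℓ ≤ k-1`.  (Everything is 0-based here: position `j` holds the vector with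
1-based index `j+1`, and `x ℓ` is the 1-based coordinate `x_{ℓ+1}`.) -/
def BitCond (k d : ℕ) (i : ℕ) (p : Fin k → Option (Vec d)) (x : Fin (k - 1) → Fin d) :
    Prop :=
  (∀ j : Fin k, (j : ℕ) < k - i → ∀ w, p j = some w →
    ∀ ℓ : Fin (k - 1), (ℓ : ℕ) < k - ((j : ℕ) + 1) → w (x ℓ) = true) ∧
  (∀ j : Fin k, k - i + 2 ≤ (j : ℕ) → ∀ w, p j = some w →
    ∀ ℓ : Fin (k - 1), k - ((j : ℕ) + 1) ≤ (ℓ : ℕ) → w (x ℓ) = true)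

/-- The layer `L_i`, for `i = 1, …, k+1`. -/
def setL (k d : ℕ) (S : Finset (Vec d)) (i : ℕ) : Set (Vert k d) :=
  { w | ∃ p x, w = Vert.node (Tag.L i) p x ∧
      ((i = 1 ∧ FillsS k d S (fun j => j < k - 1) p ∧ ZeroX k d x) ∨
       (i = k + 1 ∧ FillsS k d S (fun j => 1 ≤ j) p ∧ ZeroX k d x) ∨
       (2 ≤ i ∧ i ≤ k ∧ FillsS k d S (fun j => j < k - i ∨ k - i + 2 ≤ j) p ∧
         BitCond k d i p x)) }

/-- The layer `L'_i`, for `i = 3, …, k-1`: same vector tuples as `L_i` but with an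
arbitrary coordinate array. -/
def setL' (k d : ℕ) (S : Finset (Vec d)) (i : ℕ) : Set (Vert k d) :=
  { w | ∃ p x, w = Vert.node (Tag.L' i) p x ∧ 3 ≤ i ∧ i ≤ k - 1 ∧
      FillsS k d S (fun j => j < k - i ∨ k - i + 2 ≤ j) p }

/-- The set `A_i`, for `i = 4, …, k-1`: tuples `(a_1, …, a_{k-i})`. -/
def setA (k d : ℕ) (S : Finset (Vec d)) (i : ℕ) : Set (Vert k d) :=
  { w | ∃ p x, w = Vert.node (Tag.A i) p x ∧ 4 ≤ i ∧ i ≤ k - 1 ∧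
      FillsS k d S (fun j => j < k - i) p ∧ ZeroX k d x }

/-- The set `B_i`, for `i = 3, …, k-2`: tuples `(b_{k-i+3}, …, b_k)`. -/
def setB (k d : ℕ) (S : Finset (Vec d)) (i : ℕ) : Set (Vert k d) :=
  { w | ∃ p x, w = Vert.node (Tag.B i) p x ∧ 3 ≤ i ∧ i ≤ k - 2 ∧
      FillsS k d S (fun j => k - i + 2 ≤ j) p ∧ ZeroX k d x }

/-- `L = ∪_i L_i`. -/
def setLall (k d : ℕ) (S : Finset (Vec d)) : Set (Vert k d) := ⋃ i, setL k d S i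

/-- `L' = ∪_i L'_i`. -/
def setL'all (k d : ℕ) (S : Finset (Vec d)) : Set (Vert k d) := ⋃ i, setL' k d S i

/-- `A = ∪_i A_i`. -/
def setAall (k d : ℕ) (S : Finset (Vec d)) : Set (Vert k d) := ⋃ i, setA k d S i

/-- `B = ∪_i B_i`. -/
def setBall (k d : ℕ) (S : Finset (Vec d)) : Set (Vert k d) := ⋃ i, setB k d S i

/-- Level `i` is `L_i ∪ L'_i ∪ A_i ∪ B_i`. -/
def level (k d : ℕ) (S : Finset (Vec d)) (i : ℕ) : Set (Vert k d) :=
  setL k d S i ∪ setL' k d S i ∪ setA k d S i ∪ setB k d S i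

/-- The vertex set of the graph `G`. -/
def VertexSet (k d : ℕ) (S : Finset (Vec d)) : Set (Vert k d) :=
  setLall k d S ∪ setL'all k d S ∪ setAall k d S ∪ setBall k d S ∪ {Vert.uu, Vert.vv}

/-! ### Edges -/

/-- One orientation of the (undirected) swap edges.  Between `L_i` and `L_{i+1}`
(`2 ≤ i ≤ k-1`) the vector `a_{k-i}` (0-based position `k-i-1`) is exchanged for the
vector `b_{k-i+2}` (0-based position `k-i+1`), keeping the coordinate array; between
`L_1` and `L_2` the vector `a_{k-1}` is exchanged for a coordinate array; between
`L_{k+1}` and `L_k` the vector `b_2` is exchanged for a coordinate array. -/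
def SwapE (k d : ℕ) (S : Finset (Vec d)) (α β : Vert k d) : Prop :=
  (∃ i p x p' x', 2 ≤ i ∧ i ≤ k - 1 ∧
      α = Vert.node (Tag.L i) p x ∧ β = Vert.node (Tag.L (i + 1)) p' x' ∧
      α ∈ setL k d S i ∧ β ∈ setL k d S (i + 1) ∧ x' = x ∧
      (∀ j : Fin k, (j : ℕ) ≠ k - i - 1 → (j : ℕ) ≠ k - i + 1 → p' j = p j)) ∨
  (∃ p x p' x',
      α = Vert.node (Tag.L 1) p x ∧ β = Vert.node (Tag.L 2) p' x' ∧
      α ∈ setL k d S 1 ∧ β ∈ setL k d S 2 ∧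
      (∀ j : Fin k, (j : ℕ) ≠ k - 2 → p' j = p j)) ∨
  (∃ p x p' x',
      α = Vert.node (Tag.L (k + 1)) p x ∧ β = Vert.node (Tag.L k) p' x' ∧
      α ∈ setL k d S (k + 1) ∧ β ∈ setL k d S k ∧
      (∀ j : Fin k, (j : ℕ) ≠ 1 → p' j = p j))

/-- One orientation of the (undirected) vector-change edges between `L_i` and `L'_i`
(`3 ≤ i ≤ k-1`): same coordinate array, same vectors except possibly one of `a_{k-i}`
(position `k-i-1`) or `b_{k-i+3}` (position `k-i+2`). -/
def VecE (k d : ℕ) (S : Finset (Vec d)) (α β : Vert k d) : Prop :=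
  ∃ i p x p' x', 3 ≤ i ∧ i ≤ k - 1 ∧
    α = Vert.node (Tag.L i) p x ∧ β = Vert.node (Tag.L' i) p' x' ∧
    α ∈ setL k d S i ∧ β ∈ setL' k d S i ∧ x' = x ∧
    ((∀ j : Fin k, (j : ℕ) ≠ k - i - 1 → p' j = p j) ∨
     (∀ j : Fin k, (j : ℕ) ≠ k - i + 2 → p' j = p j))

/-- The (undirected, symmetric as stated) coordinate-change edges: two distinct
vertices with the same vector tuple, within each `L'_i`, between `L'_i` and `L_i`,
within `L_2` and within `L_k`. -/
def CoordE (k d : ℕ) (S : Finset (Vec d)) (α β : Vert k d) : Prop :=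
  ∃ t t' p x x', α = Vert.node t p x ∧ β = Vert.node t' p x' ∧ α ≠ β ∧
    ((∃ i, α ∈ setL' k d S i ∧ β ∈ setL' k d S i) ∨
     (∃ i, α ∈ setL' k d S i ∧ β ∈ setL k d S i) ∨
     (∃ i, α ∈ setL k d S i ∧ β ∈ setL' k d S i) ∨
     (α ∈ setL k d S 2 ∧ β ∈ setL k d S 2) ∨
     (α ∈ setL k d S k ∧ β ∈ setL k d S k))

/-- The directed `a`-type back edges: from `L_i ∪ L'_i` to the matching prefix in `A_i`;
from `A_i` to every vertex of `L'_4` with the matching prefix; and from `A_{k-1}`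
to every vertex of `A_i` with the same first vector `a_1`. -/
def ABack (k d : ℕ) (S : Finset (Vec d)) (α β : Vert k d) : Prop :=
  (∃ i t p x p' x', (α ∈ setL k d S i ∨ α ∈ setL' k d S i) ∧ β ∈ setA k d S i ∧
      α = Vert.node t p x ∧ β = Vert.node (Tag.A i) p' x' ∧
      (∀ j : Fin k, (j : ℕ) < k - i → p' j = p j)) ∨
  (∃ i p x p' x', α ∈ setA k d S i ∧ β ∈ setL' k d S 4 ∧
      α = Vert.node (Tag.A i) p x ∧ β = Vert.node (Tag.L' 4) p' x' ∧
      (∀ j : Fin k, (j : ℕ) < k - i → p' j = p j)) ∨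
  (∃ i p x p' x', α ∈ setA k d S (k - 1) ∧ β ∈ setA k d S i ∧
      α = Vert.node (Tag.A (k - 1)) p x ∧ β = Vert.node (Tag.A i) p' x' ∧
      (∀ j : Fin k, (j : ℕ) = 0 → p' j = p j))

/-- The directed `b`-type back edges: from `B_i` to every vertex of `L_i ∪ L'_i` with
the matching suffix; from every vertex of `L'_{k-2}` to the vertex of `B_i` with the
matching suffix; and from `B_i` to the vertex of `B_3` with the same last vector. -/
def BBack (k d : ℕ) (S : Finset (Vec d)) (α β : Vert k d) : Prop :=
  (∃ i t p x p' x', α ∈ setB k d S i ∧ (β ∈ setL k d S i ∨ β ∈ setL' k d S i) ∧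
      α = Vert.node (Tag.B i) p x ∧ β = Vert.node t p' x' ∧
      (∀ j : Fin k, k - i + 2 ≤ (j : ℕ) → p j = p' j)) ∨
  (∃ i p x p' x', α ∈ setL' k d S (k - 2) ∧ β ∈ setB k d S i ∧
      α = Vert.node (Tag.L' (k - 2)) p x ∧ β = Vert.node (Tag.B i) p' x' ∧
      (∀ j : Fin k, k - i + 2 ≤ (j : ℕ) → p' j = p j)) ∨
  (∃ i p x p' x', α ∈ setB k d S i ∧ β ∈ setB k d S 3 ∧
      α = Vert.node (Tag.B i) p x ∧ β = Vert.node (Tag.B 3) p' x' ∧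
      (∀ j : Fin k, (j : ℕ) = k - 1 → p' j = p j))

/-- The directed `ba`-type back edges: from every vertex of `B_i` to every vertex of
`A_i`, for `4 ≤ i ≤ k-2`. -/
def BABack (k d : ℕ) (S : Finset (Vec d)) (α β : Vert k d) : Prop :=
  ∃ i, 4 ≤ i ∧ i ≤ k - 2 ∧ α ∈ setB k d S i ∧ β ∈ setA k d S i

/-- The directed fixed edges: `L'_{k-2} → v`, `v → L_1 ∪ L_2`, `L_k ∪ L_{k+1} → u`,
and `u → L'_4`. -/
def FixedE (k d : ℕ) (S : Finset (Vec d)) (α β : Vert k d) : Prop :=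
  (α ∈ setL' k d S (k - 2) ∧ β = Vert.vv) ∨
  (α = Vert.vv ∧ (β ∈ setL k d S 1 ∨ β ∈ setL k d S 2)) ∨
  ((α ∈ setL k d S k ∨ α ∈ setL k d S (k + 1)) ∧ β = Vert.uu) ∨
  (α = Vert.uu ∧ β ∈ setL' k d S 4)

/-- The adjacency relation of the graph `G` (undirected edges appear in both
directions). -/
def Adj (k d : ℕ) (S : Finset (Vec d)) (α β : Vert k d) : Prop :=
  SwapE k d S α β ∨ SwapE k d S β α ∨ VecE k d S α β ∨ VecE k d S β α ∨
  CoordE k d S α β ∨ ABack k d S α β ∨ BBack k d S α β ∨ BABack k d S α β ∨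
  FixedE k d S α β

/-! ### Loops and covers (Section 5) -/

/-- `t` is the first time at which the walk `P` (of length `n`) visits `L_i`. -/
def FirstVisit (k d : ℕ) (S : Finset (Vec d)) (P : ℕ → Vert k d) (n i t : ℕ) : Prop :=
  t ≤ n ∧ P t ∈ setL k d S i ∧ ∀ s, s < t → P s ∉ setL k d S i

/-- `t` is the last time at which the walk `P` (of length `n`) visits `L_i`. -/
def LastVisit (k d : ℕ) (S : Finset (Vec d)) (P : ℕ → Vert k d) (n i t : ℕ) : Prop :=
  t ≤ n ∧ P t ∈ setL k d S i ∧ ∀ s, t < s → s ≤ n → P s ∉ setL k d S i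

/-- The layer `L_i` is in a loop: the walk `P` visits `L_i` at least twice. -/
def InLoop (k d : ℕ) (S : Finset (Vec d)) (P : ℕ → Vert k d) (n i : ℕ) : Prop :=
  ∃ t1 t2, t1 < t2 ∧ t2 ≤ n ∧ P t1 ∈ setL k d S i ∧ P t2 ∈ setL k d S i

/-- The walk `P` visits `A`. -/
def VisitsA (k d : ℕ) (S : Finset (Vec d)) (P : ℕ → Vert k d) (n : ℕ) : Prop :=
  ∃ t ≤ n, P t ∈ setAall k d S

/-- The walk `P` visits `B`. -/
def VisitsB (k d : ℕ) (S : Finset (Vec d)) (P : ℕ → Vert k d) (n : ℕ) : Prop :=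
  ∃ t ≤ n, P t ∈ setBall k d S

/-- The layer `L_i` covers the layer `L_m` (with respect to the walk `P` of length `n`):
for `3 ≤ i ≤ k-1`, `L_i` covers `L_{i-1}` if `L_{i-1}` is not in a loop, `L_i` is in a
loop, and the first and last vertices of `P` in `L_i` differ in the vector `b_{k-i+3}`
(0-based position `k-i+2`) and in the coordinate array; symmetrically `L_i` covers
`L_{i+1}` using the vector `a_{k-i}` (0-based position `k-i-1`).  Additionally `L_4`
covers both `L_3` and `L_2` if `P` visits `A`, and `L_{k-2}` covers both `L_{k-1}` and
`L_k` if `P` visits `B`. -/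
def Covers (k d : ℕ) (S : Finset (Vec d)) (P : ℕ → Vert k d) (n : ℕ) (i m : ℕ) : Prop :=
  (3 ≤ i ∧ i ≤ k - 1 ∧ m + 1 = i ∧ ¬ InLoop k d S P n m ∧ InLoop k d S P n i ∧
    ∃ t1 t2 p1 x1 p2 x2, FirstVisit k d S P n i t1 ∧ LastVisit k d S P n i t2 ∧
      P t1 = Vert.node (Tag.L i) p1 x1 ∧ P t2 = Vert.node (Tag.L i) p2 x2 ∧
      (∀ j : Fin k, (j : ℕ) = k - i + 2 → p1 j ≠ p2 j) ∧ x1 ≠ x2) ∨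
  (3 ≤ i ∧ i ≤ k - 1 ∧ m = i + 1 ∧ ¬ InLoop k d S P n m ∧ InLoop k d S P n i ∧
    ∃ t1 t2 p1 x1 p2 x2, FirstVisit k d S P n i t1 ∧ LastVisit k d S P n i t2 ∧
      P t1 = Vert.node (Tag.L i) p1 x1 ∧ P t2 = Vert.node (Tag.L i) p2 x2 ∧
      (∀ j : Fin k, (j : ℕ) = k - i - 1 → p1 j ≠ p2 j) ∧ x1 ≠ x2) ∨
  (i = 4 ∧ (m = 3 ∨ m = 2) ∧ VisitsA k d S P n) ∨
  (i = k - 2 ∧ (m = k - 1 ∨ m = k) ∧ VisitsB k d S P n)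


/-! ### Auxiliary machinery for Lemma 5.4 -/

private lemma node_eq_node {k d : ℕ} {t t' : Tag} {p p' : Fin k → Option (Vec d)}
    {x x' : Fin (k - 1) → Fin d}
    (h : (Vert.node t p x : Vert k d) = Vert.node t' p' x') : t = t' ∧ p = p' ∧ x = x' := by
  injection h with h1 h2 h3
  exact ⟨h1, h2, h3⟩

private lemma mem_setL_elim {k d : ℕ} {S : Finset (Vec d)} {w : Vert k d} {i : ℕ}
    (h : w ∈ setL k d S i) : ∃ p x, w = Vert.node (Tag.L i) p x := by
  obtain ⟨p, x, rfl, -⟩ := h; exact ⟨p, x, rfl⟩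

private lemma mem_setL'_elim {k d : ℕ} {S : Finset (Vec d)} {w : Vert k d} {i : ℕ}
    (h : w ∈ setL' k d S i) : ∃ p x, w = Vert.node (Tag.L' i) p x ∧ 3 ≤ i ∧ i ≤ k - 1 := by
  obtain ⟨p, x, rfl, h3, hk, -⟩ := h; exact ⟨p, x, rfl, h3, hk⟩

private lemma mem_setA_elim {k d : ℕ} {S : Finset (Vec d)} {w : Vert k d} {i : ℕ}
    (h : w ∈ setA k d S i) : ∃ p x, w = Vert.node (Tag.A i) p x ∧ 4 ≤ i ∧ i ≤ k - 1 := by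
  obtain ⟨p, x, rfl, h3, hk, -⟩ := h; exact ⟨p, x, rfl, h3, hk⟩

private lemma mem_setB_elim {k d : ℕ} {S : Finset (Vec d)} {w : Vert k d} {i : ℕ}
    (h : w ∈ setB k d S i) : ∃ p x, w = Vert.node (Tag.B i) p x ∧ 3 ≤ i ∧ i ≤ k - 2 := by
  obtain ⟨p, x, rfl, h3, hk, -⟩ := h; exact ⟨p, x, rfl, h3, hk⟩

/-- The prefix condition on a partial tuple. -/
def Pre (k d i : ℕ) (a : Fin k → Vec d) (p : Fin k → Option (Vec d)) : Prop :=
  ∀ j : Fin k, (j : ℕ) < k - i → p j = some (a j)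

/-- The suffix condition on a partial tuple. -/
def Suf (k d i : ℕ) (a : Fin k → Vec d) (p : Fin k → Option (Vec d)) : Prop :=
  ∀ j : Fin k, k - i + 2 ≤ (j : ℕ) → p j = some (a j)

private lemma pre_transfer {k d i : ℕ} {a : Fin k → Vec d} {p p' : Fin k → Option (Vec d)}
    (h : Pre k d i a p) (hkeep : ∀ j : Fin k, (j : ℕ) < k - i → p' j = p j) :
    Pre k d i a p' := fun j hj => (hkeep j hj).trans (h j hj)

private lemma suf_transfer {k d i : ℕ} {a : Fin k → Vec d} {p p' : Fin k → Option (Vec d)}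
    (h : Suf k d i a p) (hkeep : ∀ j : Fin k, k - i + 2 ≤ (j : ℕ) → p' j = p j) :
    Suf k d i a p' := fun j hj => (hkeep j hj).trans (h j hj)

/-- Invariant before the first visit of `L_i` (avoiding `B`). -/
def Inv1 (k d : ℕ) (S : Finset (Vec d)) (a : Fin k → Vec d) (i : ℕ) (w : Vert k d) : Prop :=
  ∃ m p x, m < i ∧ Pre k d i a p ∧
    ((w = Vert.node (Tag.L m) p x ∧ w ∈ setL k d S m) ∨
     (w = Vert.node (Tag.L' m) p x ∧ w ∈ setL' k d S m) ∨
     (w = Vert.node (Tag.A m) p x ∧ w ∈ setA k d S m))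

/-- Invariant after the last visit of `L_i` (avoiding `A`). -/
def Inv2 (k d : ℕ) (S : Finset (Vec d)) (a : Fin k → Vec d) (i : ℕ) (w : Vert k d) : Prop :=
  ∃ m p x, i < m ∧ Suf k d i a p ∧
    ((w = Vert.node (Tag.L m) p x ∧ w ∈ setL k d S m) ∨
     (w = Vert.node (Tag.L' m) p x ∧ w ∈ setL' k d S m) ∨
     (w = Vert.node (Tag.B m) p x ∧ w ∈ setB k d S m))

private lemma tag_of_memL {k d : ℕ} {S : Finset (Vec d)} {w : Vert k d} {i : ℕ} {t : Tag}
    {p : Fin k → Option (Vec d)} {x : Fin (k - 1) → Fin d}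
    (h : w ∈ setL k d S i) (he : w = Vert.node t p x) : t = Tag.L i := by
  obtain ⟨p2, x2, h2⟩ := mem_setL_elim h
  exact (node_eq_node (he.symm.trans h2)).1

private lemma tag_of_memL' {k d : ℕ} {S : Finset (Vec d)} {w : Vert k d} {i : ℕ} {t : Tag}
    {p : Fin k → Option (Vec d)} {x : Fin (k - 1) → Fin d}
    (h : w ∈ setL' k d S i) (he : w = Vert.node t p x) : t = Tag.L' i := by
  obtain ⟨p2, x2, h2, -, -⟩ := mem_setL'_elim h
  exact (node_eq_node (he.symm.trans h2)).1

private lemma step1 {k d : ℕ} {S : Finset (Vec d)} {a : Fin k → Vec d} {i : ℕ}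
    (hk : 5 ≤ k) (hi2 : 2 ≤ i) (hik : i < k) {α β : Vert k d}
    (hadj : Adj k d S α β) (hβBall : β ∉ setBall k d S)
    (hβu : β ≠ Vert.uu) (hβv : β ≠ Vert.vv)
    (hba : ¬ BABack k d S α β) (hInv : Inv1 k d S a i α) :
    (∃ p x, β = Vert.node (Tag.L i) p x ∧ β ∈ setL k d S i ∧ Pre k d i a p) ∨
      Inv1 k d S a i β := by
  obtain ⟨m, pm, xm, hmi, hPre, hcase⟩ := hInv
  rcases hadj with hsw | hsw | hvc | hvc | hco | hab | hbb | hbab | hfx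
  · -- SwapE α β
    rcases hsw with ⟨j, p1, x1, p1', x1', hj2, hjk1, hαe, hβe, hαL, hβL, rfl, hkeep⟩ |
      ⟨p1, x1, p1', x1', hαe, hβe, hαL, hβL, hkeep⟩ |
      ⟨p1, x1, p1', x1', hαe, hβe, hαL, hβL, hkeep⟩
    · rcases hcase with ⟨hαI, -⟩ | ⟨hαI, -⟩ | ⟨hαI, -⟩
      · obtain ⟨ht, hp, hx⟩ := node_eq_node (hαI.symm.trans hαe)
        injection ht with hmj
        subst hmj; subst hp
        have hPre' : Pre k d i a p1' :=
          pre_transfer hPre fun jj hjj => hkeep jj (by omega) (by omega)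
        by_cases hji : m + 1 = i
        · exact Or.inl ⟨p1', x1', hji ▸ hβe, hji ▸ hβL, hPre'⟩
        · exact Or.inr ⟨m + 1, p1', x1', by omega, hPre', Or.inl ⟨hβe, hβL⟩⟩
      · exact Tag.noConfusion (node_eq_node (hαI.symm.trans hαe)).1
      · exact Tag.noConfusion (node_eq_node (hαI.symm.trans hαe)).1
    · rcases hcase with ⟨hαI, -⟩ | ⟨hαI, -⟩ | ⟨hαI, -⟩
      · obtain ⟨ht, hp, hx⟩ := node_eq_node (hαI.symm.trans hαe)
        injection ht with hmj
        subst hp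
        have hPre' : Pre k d i a p1' :=
          pre_transfer hPre fun jj hjj => hkeep jj (by omega)
        by_cases hji : i = 2
        · subst hji; exact Or.inl ⟨p1', x1', hβe, hβL, hPre'⟩
        · exact Or.inr ⟨2, p1', x1', by omega, hPre', Or.inl ⟨hβe, hβL⟩⟩
      · exact Tag.noConfusion (node_eq_node (hαI.symm.trans hαe)).1
      · exact Tag.noConfusion (node_eq_node (hαI.symm.trans hαe)).1
    · rcases hcase with ⟨hαI, -⟩ | ⟨hαI, -⟩ | ⟨hαI, -⟩
      · obtain ⟨ht, hp, hx⟩ := node_eq_node (hαI.symm.trans hαe)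
        injection ht with hmj
        omega
      · exact Tag.noConfusion (node_eq_node (hαI.symm.trans hαe)).1
      · exact Tag.noConfusion (node_eq_node (hαI.symm.trans hαe)).1
  · -- SwapE β α
    rcases hsw with ⟨j, p1, x1, p1', x1', hj2, hjk1, hβe, hαe, hβL, hαL, rfl, hkeep⟩ |
      ⟨p1, x1, p1', x1', hβe, hαe, hβL, hαL, hkeep⟩ |
      ⟨p1, x1, p1', x1', hβe, hαe, hβL, hαL, hkeep⟩
    · rcases hcase with ⟨hαI, -⟩ | ⟨hαI, -⟩ | ⟨hαI, -⟩
      · obtain ⟨ht, hp, hx⟩ := node_eq_node (hαI.symm.trans hαe)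
        injection ht with hmj
        subst hp
        have hPre' : Pre k d i a p1 :=
          pre_transfer hPre fun jj hjj => (hkeep jj (by omega) (by omega)).symm
        exact Or.inr ⟨j, p1, x1', by omega, hPre', Or.inl ⟨hβe, hβL⟩⟩
      · exact Tag.noConfusion (node_eq_node (hαI.symm.trans hαe)).1
      · exact Tag.noConfusion (node_eq_node (hαI.symm.trans hαe)).1
    · rcases hcase with ⟨hαI, -⟩ | ⟨hαI, -⟩ | ⟨hαI, -⟩
      · obtain ⟨ht, hp, hx⟩ := node_eq_node (hαI.symm.trans hαe)
        injection ht with hmj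
        subst hp
        have hPre' : Pre k d i a p1 :=
          pre_transfer hPre fun jj hjj => (hkeep jj (by omega)).symm
        exact Or.inr ⟨1, p1, x1, by omega, hPre', Or.inl ⟨hβe, hβL⟩⟩
      · exact Tag.noConfusion (node_eq_node (hαI.symm.trans hαe)).1
      · exact Tag.noConfusion (node_eq_node (hαI.symm.trans hαe)).1
    · rcases hcase with ⟨hαI, -⟩ | ⟨hαI, -⟩ | ⟨hαI, -⟩
      · obtain ⟨ht, hp, hx⟩ := node_eq_node (hαI.symm.trans hαe)
        injection ht with hmj
        omega
      · exact Tag.noConfusion (node_eq_node (hαI.symm.trans hαe)).1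
      · exact Tag.noConfusion (node_eq_node (hαI.symm.trans hαe)).1
  · -- VecE α β
    obtain ⟨j, p1, x1, p1', x1', hj3, hjk1, hαe, hβe, hαL, hβL', rfl, hkor⟩ := hvc
    rcases hcase with ⟨hαI, -⟩ | ⟨hαI, -⟩ | ⟨hαI, -⟩
    · obtain ⟨ht, hp, hx⟩ := node_eq_node (hαI.symm.trans hαe)
      injection ht with hmj
      subst hmj; subst hp
      have hPre' : Pre k d i a p1' := by
        rcases hkor with hkeep | hkeep
        · exact pre_transfer hPre fun jj hjj => hkeep jj (by omega)
        · exact pre_transfer hPre fun jj hjj => hkeep jj (by omega)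
      exact Or.inr ⟨m, p1', x1', hmi, hPre', Or.inr (Or.inl ⟨hβe, hβL'⟩)⟩
    · exact Tag.noConfusion (node_eq_node (hαI.symm.trans hαe)).1
    · exact Tag.noConfusion (node_eq_node (hαI.symm.trans hαe)).1
  · -- VecE β α
    obtain ⟨j, p1, x1, p1', x1', hj3, hjk1, hβe, hαe, hβL, hαL', rfl, hkor⟩ := hvc
    rcases hcase with ⟨hαI, -⟩ | ⟨hαI, -⟩ | ⟨hαI, -⟩
    · exact Tag.noConfusion (node_eq_node (hαI.symm.trans hαe)).1
    · obtain ⟨ht, hp, hx⟩ := node_eq_node (hαI.symm.trans hαe)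
      injection ht with hmj
      subst hmj; subst hp
      have hPre' : Pre k d i a p1 := by
        rcases hkor with hkeep | hkeep
        · exact pre_transfer hPre fun jj hjj => (hkeep jj (by omega)).symm
        · exact pre_transfer hPre fun jj hjj => (hkeep jj (by omega)).symm
      exact Or.inr ⟨m, p1, x1', hmi, hPre', Or.inl ⟨hβe, hβL⟩⟩
    · exact Tag.noConfusion (node_eq_node (hαI.symm.trans hαe)).1
  · -- CoordE α β
    obtain ⟨t1, t1', p1, x1, x1', hαe, hβe, hne, hor⟩ := hco
    rcases hcase with ⟨hαI, -⟩ | ⟨hαI, -⟩ | ⟨hαI, -⟩ <;>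
      obtain ⟨ht, hp, hx⟩ := node_eq_node (hαI.symm.trans hαe) <;> subst hp <;> subst ht
    · -- α has tag L m
      rcases hor with ⟨j, hαm, hβm⟩ | ⟨j, hαm, hβm⟩ | ⟨j, hαm, hβm⟩ | ⟨hαm, hβm⟩ | ⟨hαm, hβm⟩
      · exact Tag.noConfusion (tag_of_memL' hαm hαI)
      · exact Tag.noConfusion (tag_of_memL' hαm hαI)
      · injection tag_of_memL hαm hαI with hmj
        subst hmj
        have hrep : β = Vert.node (Tag.L' m) pm x1' := by
          rw [hβe, tag_of_memL' hβm hβe]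
        exact Or.inr ⟨m, pm, x1', hmi, hPre, Or.inr (Or.inl ⟨hrep, hβm⟩)⟩
      · injection tag_of_memL hαm hαI with hmj
        have hrep : β = Vert.node (Tag.L 2) pm x1' := by
          rw [hβe, tag_of_memL hβm hβe]
        exact Or.inr ⟨2, pm, x1', by omega, hPre, Or.inl ⟨hrep, hβm⟩⟩
      · injection tag_of_memL hαm hαI with hmj
        omega
    · -- α has tag L' m
      rcases hor with ⟨j, hαm, hβm⟩ | ⟨j, hαm, hβm⟩ | ⟨j, hαm, hβm⟩ | ⟨hαm, hβm⟩ | ⟨hαm, hβm⟩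
      · injection tag_of_memL' hαm hαI with hmj
        subst hmj
        have hrep : β = Vert.node (Tag.L' m) pm x1' := by
          rw [hβe, tag_of_memL' hβm hβe]
        exact Or.inr ⟨m, pm, x1', hmi, hPre, Or.inr (Or.inl ⟨hrep, hβm⟩)⟩
      · injection tag_of_memL' hαm hαI with hmj
        subst hmj
        have hrep : β = Vert.node (Tag.L m) pm x1' := by
          rw [hβe, tag_of_memL hβm hβe]
        exact Or.inr ⟨m, pm, x1', hmi, hPre, Or.inl ⟨hrep, hβm⟩⟩
      · exact Tag.noConfusion (tag_of_memL hαm hαI)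
      · exact Tag.noConfusion (tag_of_memL hαm hαI)
      · exact Tag.noConfusion (tag_of_memL hαm hαI)
    · -- α has tag A m
      rcases hor with ⟨j, hαm, hβm⟩ | ⟨j, hαm, hβm⟩ | ⟨j, hαm, hβm⟩ | ⟨hαm, hβm⟩ | ⟨hαm, hβm⟩
      · exact Tag.noConfusion (tag_of_memL' hαm hαI)
      · exact Tag.noConfusion (tag_of_memL' hαm hαI)
      · exact Tag.noConfusion (tag_of_memL hαm hαI)
      · exact Tag.noConfusion (tag_of_memL hαm hαI)
      · exact Tag.noConfusion (tag_of_memL hαm hαI)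
  · -- ABack α β
    rcases hab with ⟨j, tg, p1, x1, p1', x1', hαm, hβA, hαe, hβe, hkeep⟩ |
      ⟨j, p1, x1, p1', x1', hαA, hβm, hαe, hβe, hkeep⟩ |
      ⟨j, p1, x1, p1', x1', hαA, hβA2, hαe, hβe, hkeep⟩
    · obtain ⟨hmj, hp⟩ : m = j ∧ pm = p1 := by
        rcases hcase with ⟨hαI, -⟩ | ⟨hαI, -⟩ | ⟨hαI, -⟩ <;> rcases hαm with hαm | hαm
        · injection tag_of_memL hαm hαI with h
          exact ⟨h, (node_eq_node (hαI.symm.trans hαe)).2.1⟩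
        · exact Tag.noConfusion (tag_of_memL' hαm hαI)
        · exact Tag.noConfusion (tag_of_memL hαm hαI)
        · injection tag_of_memL' hαm hαI with h
          exact ⟨h, (node_eq_node (hαI.symm.trans hαe)).2.1⟩
        · exact Tag.noConfusion (tag_of_memL hαm hαI)
        · exact Tag.noConfusion (tag_of_memL' hαm hαI)
      subst hp; subst hmj
      have hPre' : Pre k d i a p1' :=
        pre_transfer hPre fun jj hjj => hkeep jj (by omega)
      exact Or.inr ⟨m, p1', x1', by omega, hPre', Or.inr (Or.inr ⟨hβe, hβA⟩)⟩
    · rcases hcase with ⟨hαI, -⟩ | ⟨hαI, -⟩ | ⟨hαI, -⟩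
      · exact Tag.noConfusion (node_eq_node (hαI.symm.trans hαe)).1
      · exact Tag.noConfusion (node_eq_node (hαI.symm.trans hαe)).1
      · obtain ⟨ht, hp, hx⟩ := node_eq_node (hαI.symm.trans hαe)
        injection ht with hmj
        subst hmj; subst hp
        obtain ⟨p2, x2, h2, hj4, hjk1⟩ := mem_setA_elim hαA
        have hPre' : Pre k d i a p1' :=
          pre_transfer hPre fun jj hjj => hkeep jj (by omega)
        exact Or.inr ⟨4, p1', x1', by omega, hPre', Or.inr (Or.inl ⟨hβe, hβm⟩)⟩
    · rcases hcase with ⟨hαI, -⟩ | ⟨hαI, -⟩ | ⟨hαI, -⟩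
      · exact Tag.noConfusion (node_eq_node (hαI.symm.trans hαe)).1
      · exact Tag.noConfusion (node_eq_node (hαI.symm.trans hαe)).1
      · obtain ⟨ht, hp, hx⟩ := node_eq_node (hαI.symm.trans hαe)
        injection ht with hmj
        omega
  · -- BBack α β
    rcases hbb with ⟨j, tg, p1, x1, p1', x1', hαB, hβm, hαe, hβe, hkeep⟩ |
      ⟨j, p1, x1, p1', x1', hαm, hβB, hαe, hβe, hkeep⟩ |
      ⟨j, p1, x1, p1', x1', hαB, hβB3, hαe, hβe, hkeep⟩
    · rcases hcase with ⟨hαI, -⟩ | ⟨hαI, -⟩ | ⟨hαI, -⟩ <;>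
        exact Tag.noConfusion (node_eq_node (hαI.symm.trans hαe)).1
    · exact absurd (Set.mem_iUnion.mpr ⟨j, hβB⟩) hβBall
    · rcases hcase with ⟨hαI, -⟩ | ⟨hαI, -⟩ | ⟨hαI, -⟩ <;>
        exact Tag.noConfusion (node_eq_node (hαI.symm.trans hαe)).1
  · exact absurd hbab hba
  · -- FixedE
    rcases hfx with ⟨-, hv⟩ | ⟨hv, -⟩ | ⟨-, hu⟩ | ⟨hu, -⟩
    · exact absurd hv hβv
    · rcases hcase with ⟨hαI, -⟩ | ⟨hαI, -⟩ | ⟨hαI, -⟩ <;>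
        exact nomatch (hv.symm.trans hαI)
    · exact absurd hu hβu
    · rcases hcase with ⟨hαI, -⟩ | ⟨hαI, -⟩ | ⟨hαI, -⟩ <;>
        exact nomatch (hu.symm.trans hαI)

private lemma step2 {k d : ℕ} {S : Finset (Vec d)} {a : Fin k → Vec d} {i : ℕ}
    (hk : 5 ≤ k) (hi3 : 3 ≤ i) (hik : i ≤ k) {α β : Vert k d}
    (hadj : Adj k d S α β) (hαA : α ∉ setAall k d S)
    (hαu : α ≠ Vert.uu) (hαv : α ≠ Vert.vv)
    (hba : ¬ BABack k d S α β) (hInv : Inv2 k d S a i β) :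
    (∃ p x, α = Vert.node (Tag.L i) p x ∧ α ∈ setL k d S i ∧ Suf k d i a p) ∨
      Inv2 k d S a i α := by
  obtain ⟨m, pm, xm, him, hSuf, hcase⟩ := hInv
  rcases hadj with hsw | hsw | hvc | hvc | hco | hab | hbb | hbab | hfx
  · -- SwapE α β
    rcases hsw with ⟨j, p1, x1, p1', x1', hj2, hjk1, hαe, hβe, hαL, hβL, rfl, hkeep⟩ |
      ⟨p1, x1, p1', x1', hαe, hβe, hαL, hβL, hkeep⟩ |
      ⟨p1, x1, p1', x1', hαe, hβe, hαL, hβL, hkeep⟩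
    · rcases hcase with ⟨hβI, -⟩ | ⟨hβI, -⟩ | ⟨hβI, -⟩
      · obtain ⟨ht, hp, hx⟩ := node_eq_node (hβI.symm.trans hβe)
        injection ht with hmj
        subst hp
        have hSuf' : Suf k d i a p1 :=
          suf_transfer hSuf fun jj hjj => (hkeep jj (by omega) (by omega)).symm
        by_cases hji : j = i
        · subst hji; exact Or.inl ⟨p1, x1', hαe, hαL, hSuf'⟩
        · exact Or.inr ⟨j, p1, x1', by omega, hSuf', Or.inl ⟨hαe, hαL⟩⟩
      · exact Tag.noConfusion (node_eq_node (hβI.symm.trans hβe)).1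
      · exact Tag.noConfusion (node_eq_node (hβI.symm.trans hβe)).1
    · rcases hcase with ⟨hβI, -⟩ | ⟨hβI, -⟩ | ⟨hβI, -⟩
      · obtain ⟨ht, hp, hx⟩ := node_eq_node (hβI.symm.trans hβe)
        injection ht with hmj
        omega
      · exact Tag.noConfusion (node_eq_node (hβI.symm.trans hβe)).1
      · exact Tag.noConfusion (node_eq_node (hβI.symm.trans hβe)).1
    · rcases hcase with ⟨hβI, -⟩ | ⟨hβI, -⟩ | ⟨hβI, -⟩
      · obtain ⟨ht, hp, hx⟩ := node_eq_node (hβI.symm.trans hβe)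
        injection ht with hmj
        subst hp
        have hSuf' : Suf k d i a p1 :=
          suf_transfer hSuf fun jj hjj => (hkeep jj (by omega)).symm
        exact Or.inr ⟨k + 1, p1, x1, by omega, hSuf', Or.inl ⟨hαe, hαL⟩⟩
      · exact Tag.noConfusion (node_eq_node (hβI.symm.trans hβe)).1
      · exact Tag.noConfusion (node_eq_node (hβI.symm.trans hβe)).1
  · -- SwapE β α
    rcases hsw with ⟨j, p1, x1, p1', x1', hj2, hjk1, hβe, hαe, hβL, hαL, rfl, hkeep⟩ |
      ⟨p1, x1, p1', x1', hβe, hαe, hβL, hαL, hkeep⟩ |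
      ⟨p1, x1, p1', x1', hβe, hαe, hβL, hαL, hkeep⟩
    · rcases hcase with ⟨hβI, -⟩ | ⟨hβI, -⟩ | ⟨hβI, -⟩
      · obtain ⟨ht, hp, hx⟩ := node_eq_node (hβI.symm.trans hβe)
        injection ht with hmj
        subst hp
        have hSuf' : Suf k d i a p1' :=
          suf_transfer hSuf fun jj hjj => hkeep jj (by omega) (by omega)
        exact Or.inr ⟨j + 1, p1', x1', by omega, hSuf', Or.inl ⟨hαe, hαL⟩⟩
      · exact Tag.noConfusion (node_eq_node (hβI.symm.trans hβe)).1
      · exact Tag.noConfusion (node_eq_node (hβI.symm.trans hβe)).1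
    · rcases hcase with ⟨hβI, -⟩ | ⟨hβI, -⟩ | ⟨hβI, -⟩
      · obtain ⟨ht, hp, hx⟩ := node_eq_node (hβI.symm.trans hβe)
        injection ht with hmj
        omega
      · exact Tag.noConfusion (node_eq_node (hβI.symm.trans hβe)).1
      · exact Tag.noConfusion (node_eq_node (hβI.symm.trans hβe)).1
    · rcases hcase with ⟨hβI, -⟩ | ⟨hβI, -⟩ | ⟨hβI, -⟩
      · obtain ⟨ht, hp, hx⟩ := node_eq_node (hβI.symm.trans hβe)
        injection ht with hmj
        subst hp
        have hSuf' : Suf k d i a p1' :=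
          suf_transfer hSuf fun jj hjj => hkeep jj (by omega)
        by_cases hji : k = i
        · have htag : Tag.L k = Tag.L i := by rw [hji]
          rw [htag] at hαe
          exact Or.inl ⟨p1', x1', hαe, (congrArg (setL k d S) hji) ▸ hαL, hSuf'⟩
        · exact Or.inr ⟨k, p1', x1', by omega, hSuf', Or.inl ⟨hαe, hαL⟩⟩
      · exact Tag.noConfusion (node_eq_node (hβI.symm.trans hβe)).1
      · exact Tag.noConfusion (node_eq_node (hβI.symm.trans hβe)).1
  · -- VecE α β  (α ∈ L_j, β ∈ L'_j)
    obtain ⟨j, p1, x1, p1', x1', hj3, hjk1, hαe, hβe, hαL, hβL', rfl, hkor⟩ := hvc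
    rcases hcase with ⟨hβI, -⟩ | ⟨hβI, -⟩ | ⟨hβI, -⟩
    · exact Tag.noConfusion (node_eq_node (hβI.symm.trans hβe)).1
    · obtain ⟨ht, hp, hx⟩ := node_eq_node (hβI.symm.trans hβe)
      injection ht with hmj
      subst hmj; subst hp
      have hSuf' : Suf k d i a p1 := by
        rcases hkor with hkeep | hkeep
        · exact suf_transfer hSuf fun jj hjj => (hkeep jj (by omega)).symm
        · exact suf_transfer hSuf fun jj hjj => (hkeep jj (by omega)).symm
      exact Or.inr ⟨m, p1, x1', him, hSuf', Or.inl ⟨hαe, hαL⟩⟩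
    · exact Tag.noConfusion (node_eq_node (hβI.symm.trans hβe)).1
  · -- VecE β α  (β ∈ L_j, α ∈ L'_j)
    obtain ⟨j, p1, x1, p1', x1', hj3, hjk1, hβe, hαe, hβL, hαL', rfl, hkor⟩ := hvc
    rcases hcase with ⟨hβI, -⟩ | ⟨hβI, -⟩ | ⟨hβI, -⟩
    · obtain ⟨ht, hp, hx⟩ := node_eq_node (hβI.symm.trans hβe)
      injection ht with hmj
      subst hmj; subst hp
      have hSuf' : Suf k d i a p1' := by
        rcases hkor with hkeep | hkeep
        · exact suf_transfer hSuf fun jj hjj => hkeep jj (by omega)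
        · exact suf_transfer hSuf fun jj hjj => hkeep jj (by omega)
      exact Or.inr ⟨m, p1', x1', him, hSuf', Or.inr (Or.inl ⟨hαe, hαL'⟩)⟩
    · exact Tag.noConfusion (node_eq_node (hβI.symm.trans hβe)).1
    · exact Tag.noConfusion (node_eq_node (hβI.symm.trans hβe)).1
  · -- CoordE α β
    obtain ⟨t1, t1', p1, x1, x1', hαe, hβe, hne, hor⟩ := hco
    rcases hcase with ⟨hβI, -⟩ | ⟨hβI, -⟩ | ⟨hβI, -⟩ <;>
      obtain ⟨ht, hp, hx⟩ := node_eq_node (hβI.symm.trans hβe) <;> subst hp <;> subst ht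
    · -- β has tag L m
      rcases hor with ⟨j, hαm, hβm⟩ | ⟨j, hαm, hβm⟩ | ⟨j, hαm, hβm⟩ | ⟨hαm, hβm⟩ | ⟨hαm, hβm⟩
      · exact Tag.noConfusion (tag_of_memL' hβm hβI)
      · injection tag_of_memL hβm hβI with hmj
        subst hmj
        have hrep : α = Vert.node (Tag.L' m) pm x1 := by
          rw [hαe, tag_of_memL' hαm hαe]
        exact Or.inr ⟨m, pm, x1, him, hSuf, Or.inr (Or.inl ⟨hrep, hαm⟩)⟩
      · exact Tag.noConfusion (tag_of_memL' hβm hβI)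
      · injection tag_of_memL hβm hβI with hmj
        omega
      · injection tag_of_memL hβm hβI with hmj
        have hrep : α = Vert.node (Tag.L m) pm x1 := by
          rw [hαe, tag_of_memL hαm hαe, hmj]
        exact Or.inr ⟨m, pm, x1, him, hSuf,
          Or.inl ⟨hrep, (congrArg (setL k d S) hmj).symm ▸ hαm⟩⟩
    · -- β has tag L' m
      rcases hor with ⟨j, hαm, hβm⟩ | ⟨j, hαm, hβm⟩ | ⟨j, hαm, hβm⟩ | ⟨hαm, hβm⟩ | ⟨hαm, hβm⟩
      · injection tag_of_memL' hβm hβI with hmj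
        subst hmj
        have hrep : α = Vert.node (Tag.L' m) pm x1 := by
          rw [hαe, tag_of_memL' hαm hαe]
        exact Or.inr ⟨m, pm, x1, him, hSuf, Or.inr (Or.inl ⟨hrep, hαm⟩)⟩
      · exact Tag.noConfusion (tag_of_memL hβm hβI)
      · injection tag_of_memL' hβm hβI with hmj
        subst hmj
        have hrep : α = Vert.node (Tag.L m) pm x1 := by
          rw [hαe, tag_of_memL hαm hαe]
        exact Or.inr ⟨m, pm, x1, him, hSuf, Or.inl ⟨hrep, hαm⟩⟩
      · exact Tag.noConfusion (tag_of_memL hβm hβI)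
      · exact Tag.noConfusion (tag_of_memL hβm hβI)
    · -- β has tag B m : impossible in CoordE
      rcases hor with ⟨j, hαm, hβm⟩ | ⟨j, hαm, hβm⟩ | ⟨j, hαm, hβm⟩ | ⟨hαm, hβm⟩ | ⟨hαm, hβm⟩
      · exact Tag.noConfusion (tag_of_memL' hβm hβI)
      · exact Tag.noConfusion (tag_of_memL hβm hβI)
      · exact Tag.noConfusion (tag_of_memL' hβm hβI)
      · exact Tag.noConfusion (tag_of_memL hβm hβI)
      · exact Tag.noConfusion (tag_of_memL hβm hβI)
  · -- ABack α β
    rcases hab with ⟨j, tg, p1, x1, p1', x1', hαm, hβA, hαe, hβe, hkeep⟩ |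
      ⟨j, p1, x1, p1', x1', hαA2, hβm, hαe, hβe, hkeep⟩ |
      ⟨j, p1, x1, p1', x1', hαA2, hβA2, hαe, hβe, hkeep⟩
    · rcases hcase with ⟨hβI, -⟩ | ⟨hβI, -⟩ | ⟨hβI, -⟩ <;>
        exact Tag.noConfusion (node_eq_node (hβI.symm.trans hβe)).1
    · exact absurd (Set.mem_iUnion.mpr ⟨j, hαA2⟩) hαA
    · exact absurd (Set.mem_iUnion.mpr ⟨k - 1, hαA2⟩) hαA
  · -- BBack α β
    rcases hbb with ⟨j, tg, p1, x1, p1', x1', hαB, hβm, hαe, hβe, hkeep⟩ |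
      ⟨j, p1, x1, p1', x1', hαm, hβB, hαe, hβe, hkeep⟩ |
      ⟨j, p1, x1, p1', x1', hαB, hβB3, hαe, hβe, hkeep⟩
    · obtain ⟨hmj, hp⟩ : m = j ∧ pm = p1' := by
        rcases hcase with ⟨hβI, -⟩ | ⟨hβI, -⟩ | ⟨hβI, -⟩ <;> rcases hβm with hβm | hβm
        · injection tag_of_memL hβm hβI with h
          exact ⟨h, (node_eq_node (hβI.symm.trans hβe)).2.1⟩
        · exact Tag.noConfusion (tag_of_memL' hβm hβI)
        · exact Tag.noConfusion (tag_of_memL hβm hβI)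
        · injection tag_of_memL' hβm hβI with h
          exact ⟨h, (node_eq_node (hβI.symm.trans hβe)).2.1⟩
        · exact Tag.noConfusion (tag_of_memL hβm hβI)
        · exact Tag.noConfusion (tag_of_memL' hβm hβI)
      subst hp; subst hmj
      have hSuf' : Suf k d i a p1 :=
        suf_transfer hSuf fun jj hjj => hkeep jj (by omega)
      exact Or.inr ⟨m, p1, x1, him, hSuf', Or.inr (Or.inr ⟨hαe, hαB⟩)⟩
    · rcases hcase with ⟨hβI, -⟩ | ⟨hβI, -⟩ | ⟨hβI, -⟩
      · exact Tag.noConfusion (node_eq_node (hβI.symm.trans hβe)).1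
      · exact Tag.noConfusion (node_eq_node (hβI.symm.trans hβe)).1
      · obtain ⟨ht, hp, hx⟩ := node_eq_node (hβI.symm.trans hβe)
        injection ht with hmj
        subst hmj; subst hp
        obtain ⟨p2, x2, h2, hj3', hjk2⟩ := mem_setB_elim hβB
        have hSuf' : Suf k d i a p1 :=
          suf_transfer hSuf fun jj hjj => (hkeep jj (by omega)).symm
        exact Or.inr ⟨k - 2, p1, x1, by omega, hSuf', Or.inr (Or.inl ⟨hαe, hαm⟩)⟩
    · rcases hcase with ⟨hβI, -⟩ | ⟨hβI, -⟩ | ⟨hβI, -⟩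
      · exact Tag.noConfusion (node_eq_node (hβI.symm.trans hβe)).1
      · exact Tag.noConfusion (node_eq_node (hβI.symm.trans hβe)).1
      · obtain ⟨ht, hp, hx⟩ := node_eq_node (hβI.symm.trans hβe)
        injection ht with hmj
        omega
  · exact absurd hbab hba
  · -- FixedE
    rcases hfx with ⟨-, hv⟩ | ⟨hv, -⟩ | ⟨-, hu⟩ | ⟨hu, -⟩
    · rcases hcase with ⟨hβI, -⟩ | ⟨hβI, -⟩ | ⟨hβI, -⟩ <;>
        exact nomatch (hv.symm.trans hβI)
    · exact absurd hv hαv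
    · rcases hcase with ⟨hβI, -⟩ | ⟨hβI, -⟩ | ⟨hβI, -⟩ <;>
        exact nomatch (hu.symm.trans hβI)
    · exact absurd hu hαu


/-- **Lemma 5.4.**  Let `a_1, …, a_k ∈ S`, let
`α = (a_1, …, a_{k-1}) ∈ L_1` and `β = (a_2, …, a_k) ∈ L_{k+1}` (here `a j` denotes the
vector with 1-based index `j+1`), and let `P` be a directed path in `G` from `α` to `β`
containing neither `u`, nor `v`, nor any `ba`-type back edge.  Fix `i` with
`2 ≤ i ≤ k`, and let `γ₁`, `γ₂` be the first and last vertices of `L_i` that `P`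
visits; let `P₁` be the subpath of `P` from `α` to `γ₁` and `P₂` the subpath from `γ₂`
to `β`.  If `P₁` does not visit `B`, then `γ₁` has the vector prefix
`(a_1, …, a_{k-i})`, and if `P₂` does not visit `A`, then `γ₂` has the suffix
`(a_{k-i+3}, …, a_k, x)` for some coordinate array `x`. -/
theorem first_last_visit_prefix_suffix (k d : ℕ) (hk : 5 ≤ k) (hd : 1 ≤ d)
    (S : Finset (Vec d)) (hone : ones d ∈ S)
    (a : Fin k → Vec d) (ha : ∀ j, a j ∈ S)
    (P : ℕ → Vert k d) (n : ℕ) (hP : IsWalk (Adj k d S) P n)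
    (h0 : P 0 = Vert.node (Tag.L 1)
      (fun j => if (j : ℕ) < k - 1 then some (a j) else none) (fun _ => ⟨0, hd⟩))
    (hn : P n = Vert.node (Tag.L (k + 1))
      (fun j => if 1 ≤ (j : ℕ) then some (a j) else none) (fun _ => ⟨0, hd⟩))
    (huv : ∀ t ≤ n, P t ≠ Vert.uu ∧ P t ≠ Vert.vv)
    (hba : ∀ t, t < n → ¬ BABack k d S (P t) (P (t + 1)))
    (i : ℕ) (hi2 : 2 ≤ i) (hik : i ≤ k) :
    (∀ t, FirstVisit k d S P n i t → (∀ s ≤ t, P s ∉ setBall k d S) →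
      ∃ p x, P t = Vert.node (Tag.L i) p x ∧
        ∀ j : Fin k, (j : ℕ) < k - i → p j = some (a j)) ∧
    (∀ t, LastVisit k d S P n i t → (∀ s, t ≤ s → s ≤ n → P s ∉ setAall k d S) →
      ∃ p x, P t = Vert.node (Tag.L i) p x ∧
        ∀ j : Fin k, k - i + 2 ≤ (j : ℕ) → p j = some (a j)) := by
  constructor
  · -- first-visit / prefix claim
    intro t hFV hB
    obtain ⟨htn, htL, hfirst⟩ := hFV
    by_cases hikk : k ≤ i
    · obtain ⟨p, x, he⟩ := mem_setL_elim htL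
      exact ⟨p, x, he, fun j hj => absurd hj (by omega)⟩
    · have hik2 : i < k := by omega
      have hmem0 : P 0 ∈ setL k d S 1 :=
        ⟨_, _, h0, Or.inl ⟨rfl, fun j => ⟨fun hj => ⟨a j, ha j, by simp [hj]⟩,
          fun hj => by simp [hj]⟩, fun ℓ => rfl⟩⟩
      have hInv0 : Inv1 k d S a i (P 0) := by
        refine ⟨1, _, _, by omega, ?_, Or.inl ⟨h0, hmem0⟩⟩
        intro j hj
        simp [show (j : ℕ) < k - 1 by omega]
      have key : ∀ s, s < t → Inv1 k d S a i (P s) := by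
        intro s
        induction s with
        | zero => intro _; exact hInv0
        | succ s ih =>
          intro hst
          have hs := ih (by omega)
          rcases step1 hk hi2 hik2 (hP s (by omega)) (hB (s + 1) (by omega))
              (huv (s + 1) (by omega)).1 (huv (s + 1) (by omega)).2 (hba s (by omega)) hs with
            ⟨p, x, hrep, hmem, hpre⟩ | h2
          · exact absurd hmem (hfirst (s + 1) hst)
          · exact h2
      rcases Nat.eq_zero_or_pos t with rfl | ht0
      · obtain ⟨p, x, he⟩ := mem_setL_elim htL
        obtain ⟨ht1, -, -⟩ := node_eq_node (h0.symm.trans he)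
        injection ht1 with h1
        omega
      · obtain ⟨s, rfl⟩ : ∃ s, t = s + 1 := ⟨t - 1, by omega⟩
        have hs := key s (by omega)
        rcases step1 hk hi2 hik2 (hP s (by omega)) (hB (s + 1) le_rfl)
            (huv (s + 1) (by omega)).1 (huv (s + 1) (by omega)).2 (hba s (by omega)) hs with
          ⟨p, x, hrep, hmem, hpre⟩ | h2
        · exact ⟨p, x, hrep, hpre⟩
        · obtain ⟨p, x, he⟩ := mem_setL_elim htL
          obtain ⟨mm, pmm, xmm, hmmi, -, hc⟩ := h2
          rcases hc with ⟨hrep, -⟩ | ⟨hrep, -⟩ | ⟨hrep, -⟩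
          · obtain ⟨ht1, -, -⟩ := node_eq_node (hrep.symm.trans he)
            injection ht1 with h1
            omega
          · exact Tag.noConfusion (node_eq_node (hrep.symm.trans he)).1
          · exact Tag.noConfusion (node_eq_node (hrep.symm.trans he)).1
  · -- last-visit / suffix claim
    intro t hLV hA
    obtain ⟨htn, htL, hlast⟩ := hLV
    by_cases hi2' : i ≤ 2
    · obtain ⟨p, x, he⟩ := mem_setL_elim htL
      exact ⟨p, x, he, fun j hj => absurd j.isLt (by omega)⟩
    · have hi3 : 3 ≤ i := by omega
      have hmemn : P n ∈ setL k d S (k + 1) :=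
        ⟨_, _, hn, Or.inr (Or.inl ⟨rfl, fun j => ⟨fun hj => ⟨a j, ha j, by simp [hj]⟩,
          fun hj => by simp [hj]⟩, fun ℓ => rfl⟩)⟩
      have hInvn : Inv2 k d S a i (P n) := by
        refine ⟨k + 1, _, _, by omega, ?_, Or.inl ⟨hn, hmemn⟩⟩
        intro j hj
        simp [show 1 ≤ (j : ℕ) by omega]
      have key : ∀ c s, n = s + c → t < s → Inv2 k d S a i (P s) := by
        intro c
        induction c with
        | zero =>
          intro s hns _
          rw [show s = n by omega]
          exact hInvn
        | succ c ih =>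
          intro s hns hts
          have hs1 := ih (s + 1) (by omega) (by omega)
          rcases step2 hk hi3 hik (hP s (by omega)) (hA s (by omega) (by omega))
              (huv s (by omega)).1 (huv s (by omega)).2 (hba s (by omega)) hs1 with
            ⟨p, x, hrep, hmem, hsuf⟩ | h2
          · exact absurd hmem (hlast s hts (by omega))
          · exact h2
      rcases eq_or_lt_of_le htn with rfl | htn'
      · obtain ⟨p, x, he⟩ := mem_setL_elim htL
        obtain ⟨ht1, -, -⟩ := node_eq_node (hn.symm.trans he)
        injection ht1 with h1
        omega
      · have hs1 := key (n - (t + 1)) (t + 1) (by omega) (by omega)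
        rcases step2 hk hi3 hik (hP t htn') (hA t le_rfl (by omega))
            (huv t (by omega)).1 (huv t (by omega)).2 (hba t (by omega)) hs1 with
          ⟨p, x, hrep, hmem, hsuf⟩ | h2
        · exact ⟨p, x, hrep, hsuf⟩
        · obtain ⟨p, x, he⟩ := mem_setL_elim htL
          obtain ⟨mm, pmm, xmm, hmmi, -, hc⟩ := h2
          rcases hc with ⟨hrep, -⟩ | ⟨hrep, -⟩ | ⟨hrep, -⟩
          · obtain ⟨ht1, -, -⟩ := node_eq_node (hrep.symm.trans he)
            injection ht1 with h1
            omega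
          · exact Tag.noConfusion (node_eq_node (hrep.symm.trans he)).1
          · exact Tag.noConfusion (node_eq_node (hrep.symm.trans he)).1

end DiamLB
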